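/- There is an absolute constant C > 0 such that for every real u ≥ 1 and every integer m with 4u ≤ m ≤ 5u, the number of triples (k₁, k₂, k₃) of integers with u ≤ kᵢ ≤ 2u for i = 1, 2, 3 and k₁ + k₂ + k₃ = m differs from 𝓗(m, u) by at most C·u, where 𝓗(m, u) = u² − ((m − 4u)² + (5u − m)²)/2. -/

import Mathlib

open Finset

private lemma gauss_upper' : ∀ (n : ℕ) (c : ℤ),
    (∑ k ∈ Finset.Icc c (c + n), (k - c)) * 2 = n * (n + 1) := by
  intro n
  induction n with
  | zero => intro c; simp
  | succ n ih =>
    intro c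
    have hins : Finset.Icc c (c + (n + 1 : ℕ)) = insert (c + n + 1) (Finset.Icc c (c + n)) := by
      ext x; simp only [Finset.mem_Icc, Finset.mem_insert]; push_cast; omega
    have hnot : (c + n + 1) ∉ Finset.Icc c (c + n) := by
      simp only [Finset.mem_Icc]; omega
    rw [hins, Finset.sum_insert hnot, add_mul, ih c]
    push_cast; ring

private lemma gauss_lower' : ∀ (n : ℕ) (c : ℤ),
    (∑ k ∈ Finset.Icc (c - n) c, (c - k)) * 2 = n * (n + 1) := by
  intro n
  induction n with
  | zero => intro c; simp
  | succ n ih =>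
    intro c
    have hins : Finset.Icc (c - (n + 1 : ℕ)) c = insert (c - n - 1) (Finset.Icc (c - n) c) := by
      ext x; simp only [Finset.mem_Icc, Finset.mem_insert]; push_cast; omega
    have hnot : (c - n - 1) ∉ Finset.Icc (c - n) c := by
      simp only [Finset.mem_Icc]; omega
    rw [hins, Finset.sum_insert hnot, add_mul, ih c]
    push_cast; ring

private lemma abs_sum' (a b c : ℤ) (h1 : a ≤ c) (h2 : c ≤ b) :
    (∑ k ∈ Finset.Icc a b, |k - c|) * 2 = (c - a) * (c - a + 1) + (b - c) * (b - c + 1) := by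
  have hsplit : Finset.Icc a b = Finset.Icc a c ∪ Finset.Ioc c b := by
    ext x; simp only [Finset.mem_Icc, Finset.mem_union, Finset.mem_Ioc]; omega
  have hdisj : Disjoint (Finset.Icc a c) (Finset.Ioc c b) := by
    rw [Finset.disjoint_left]
    intro x hx hx'
    simp only [Finset.mem_Icc, Finset.mem_Ioc] at hx hx'
    omega
  rw [hsplit, Finset.sum_union hdisj]
  have e1 : ∑ k ∈ Finset.Icc a c, |k - c| = ∑ k ∈ Finset.Icc a c, (c - k) :=
    Finset.sum_congr rfl (fun k hk => by
      simp only [Finset.mem_Icc] at hk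
      rw [abs_of_nonpos (by omega)]; ring)
  have e2 : ∑ k ∈ Finset.Ioc c b, |k - c| = ∑ k ∈ Finset.Icc c b, (k - c) := by
    rw [← Finset.Icc_erase_left]
    rw [Finset.sum_erase _ (by simp)]
    exact Finset.sum_congr rfl (fun k hk => by
      simp only [Finset.mem_Icc] at hk
      rw [abs_of_nonneg (by omega)])
  rw [e1, e2, add_mul]
  have g1 := gauss_lower' (c - a).toNat c
  have g2 := gauss_upper' (b - c).toNat c
  rw [show ((c - a).toNat : ℤ) = c - a by omega] at g1
  rw [show ((b - c).toNat : ℤ) = b - c by omega] at g2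
  rw [show c - (c - a) = a by ring] at g1
  rw [show c + (b - c) = b by ring] at g2
  rw [g1, g2]

private lemma fiber_eq' (a b m k : ℤ) (hk : k ∈ Finset.Icc a b) :
    (((Finset.Icc a b) ×ˢ (Finset.Icc a b) ×ˢ (Finset.Icc a b)).filter
        (fun t => t.1 + t.2.1 + t.2.2 = m)).filter (fun t => t.1 = k)
      = (Finset.Icc (max a (m - k - b)) (min b (m - k - a))).image
        (fun x => (k, x, m - k - x)) := by
  ext ⟨x, y, z⟩
  simp only [Finset.mem_filter, Finset.mem_product, Finset.mem_image, Finset.mem_Icc]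
  constructor
  · rintro ⟨⟨⟨⟨hx1,hx2⟩, ⟨hy1,hy2⟩, hz1, hz2⟩, h4⟩, h5⟩
    refine ⟨y, ?_, ?_⟩
    · omega
    · simp only [Prod.mk.injEq]
      exact ⟨by omega, trivial, by omega⟩
  · rintro ⟨w, hw, hw2⟩
    simp only [Prod.mk.injEq] at hw2
    simp only [Finset.mem_Icc] at hk
    omega

private lemma count_eq' (a b m : ℤ) :
    (((Finset.Icc a b) ×ˢ (Finset.Icc a b) ×ˢ (Finset.Icc a b)).filter
        (fun t => t.1 + t.2.1 + t.2.2 = m)).card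
      = ∑ k ∈ Finset.Icc a b, (b - a + 1 - |m - k - a - b|).toNat := by
  rw [Finset.card_eq_sum_card_fiberwise (f := fun t => t.1) (t := Finset.Icc a b)
    (fun t ht => by
      simp only [Finset.mem_coe, Finset.mem_filter, Finset.mem_product] at ht
      exact ht.1.1)]
  refine Finset.sum_congr rfl (fun k hk => ?_)
  rw [fiber_eq' a b m k hk, Finset.card_image_of_injective _ (fun x y hxy => by
    simpa using congrArg (fun t => t.2.1) hxy), Int.card_Icc]
  rcases abs_cases (m - k - a - b) with ⟨h1, h2⟩ | ⟨h1, h2⟩ <;> omega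

private lemma algebra_bound' (u n p q x y : ℝ) (hu : 1 ≤ u)
    (hn1 : u - 1 ≤ n) (hn2 : n ≤ u + 1)
    (hp1 : x - 4 ≤ p) (hp2 : p ≤ x + 4)
    (hq1 : y - 4 ≤ q) (hq2 : q ≤ y + 4)
    (hx1 : 0 ≤ x) (hx2 : x ≤ u) (hy1 : 0 ≤ y) (hy2 : y ≤ u)
    (hp0 : 0 ≤ p) (hpu : p ≤ u + 1) (hq0 : 0 ≤ q) (hqu : q ≤ u + 1) :
    |n^2 - (p*(p+1) + q*(q+1))/2 - (u^2 - (x^2 + y^2)/2)| ≤ 40 * u := by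
  rw [abs_le]
  constructor <;>
    nlinarith [mul_nonneg hx1 (sub_nonneg.2 hx2), mul_nonneg hy1 (sub_nonneg.2 hy2),
      sq_nonneg (n - u), sq_nonneg (p - x), sq_nonneg (q - y),
      mul_nonneg (sub_nonneg.2 hp1) (add_nonneg hp0 hx1),
      mul_nonneg (sub_nonneg.2 hp2) (add_nonneg hp0 hx1),
      mul_nonneg (sub_nonneg.2 hq1) (add_nonneg hq0 hy1),
      mul_nonneg (sub_nonneg.2 hq2) (add_nonneg hq0 hy1)]

set_option maxHeartbeats 1000000 in
/-- The number of triples `(k₁,k₂,k₃)` of integers with `u ≤ kᵢ ≤ 2u` and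
`k₁ + k₂ + k₃ = m` differs from `𝓗(m,u) = u² - ((m-4u)² + (5u-m)²)/2` by `O(u)`. -/
theorem triple_representation_count :
    ∃ C : ℝ, 0 < C ∧
      ∀ u : ℝ, 1 ≤ u → ∀ m : ℤ, 4 * u ≤ (m : ℝ) → (m : ℝ) ≤ 5 * u →
        ∀ I : Finset ℤ, I = Finset.Icc ⌈u⌉ ⌊2 * u⌋ →
        ∀ N : ℕ, N = ((I ×ˢ I ×ˢ I).filter
            (fun t => t.1 + t.2.1 + t.2.2 = m)).card →
          abs ((N : ℝ)
            - (u ^ 2 - (((m : ℝ) - 4 * u) ^ 2 + (5 * u - (m : ℝ)) ^ 2) / 2)) ≤ C * u := by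
  refine ⟨50, by norm_num, ?_⟩
  intro u hu m hm1 hm2 I hI N hN
  subst hI
  set a : ℤ := ⌈u⌉ with ha
  set b : ℤ := ⌊2 * u⌋ with hb
  -- real bounds on a, b
  have ha1 : u ≤ (a : ℝ) := Int.le_ceil u
  have ha2 : (a : ℝ) < u + 1 := Int.ceil_lt_add_one u
  have hb1 : (b : ℝ) ≤ 2 * u := Int.floor_le (2 * u)
  have hb2 : 2 * u - 1 < (b : ℝ) := Int.sub_one_lt_floor (2 * u)
  have hab : a ≤ b := by
    have h : a < b + 1 := by exact_mod_cast (show (a : ℝ) < ((b + 1 : ℤ) : ℝ) by push_cast; linarith)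
    omega
  set c : ℤ := m - a - b with hc
  have hc1 : a - 2 ≤ c := by
    rw [hc]
    have h : ((a - 2 : ℤ) : ℝ) < ((m - a - b : ℤ) : ℝ) := by push_cast; linarith
    exact le_of_lt (by exact_mod_cast h)
  have hc2 : c ≤ b + 2 := by
    rw [hc]
    have h : ((m - a - b : ℤ) : ℝ) < ((b + 2 : ℤ) : ℝ) := by push_cast; linarith
    exact le_of_lt (by exact_mod_cast h)
  set c' : ℤ := max a (min b c) with hc'
  have hc'1 : a ≤ c' := le_max_left _ _
  have hc'2 : c' ≤ b := by omega
  have hcc'1 : c - 2 ≤ c' := by omega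
  have hcc'2 : c' ≤ c + 2 := by omega
  set n : ℤ := b - a + 1 with hn
  -- the counting identity
  rw [count_eq' a b m] at hN
  -- per-term bounds
  have hterm : ∀ k ∈ Finset.Icc a b,
      n - |k - c'| - 2 ≤ ((b - a + 1 - |m - k - a - b|).toNat : ℤ) ∧
      ((b - a + 1 - |m - k - a - b|).toNat : ℤ) ≤ n - |k - c'| + 3 := by
    intro k hk
    simp only [Finset.mem_Icc] at hk
    have hrw : m - k - a - b = c - k := by omega
    rw [hrw]
    rcases abs_cases (c - k) with ⟨e1, f1⟩ | ⟨e1, f1⟩ <;>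
      rcases abs_cases (k - c') with ⟨e2, f2⟩ | ⟨e2, f2⟩ <;>
        rw [e1, e2] <;> omega
  -- sum bounds
  have hlow : ∑ k ∈ Finset.Icc a b, (n - |k - c'| - 2)
      ≤ ∑ k ∈ Finset.Icc a b, ((b - a + 1 - |m - k - a - b|).toNat : ℤ) :=
    Finset.sum_le_sum (fun k hk => (hterm k hk).1)
  have hup : ∑ k ∈ Finset.Icc a b, ((b - a + 1 - |m - k - a - b|).toNat : ℤ)
      ≤ ∑ k ∈ Finset.Icc a b, (n - |k - c'| + 3) :=
    Finset.sum_le_sum (fun k hk => (hterm k hk).2)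
  have hNcast : (N : ℤ) = ∑ k ∈ Finset.Icc a b, ((b - a + 1 - |m - k - a - b|).toNat : ℤ) := by
    rw [hN]; push_cast; rfl
  have hcard : ((Finset.Icc a b).card : ℤ) = n := by
    rw [Int.card_Icc]; omega
  set T : ℤ := ∑ k ∈ Finset.Icc a b, |k - c'| with hT
  have hsum1 : ∑ k ∈ Finset.Icc a b, (n - |k - c'| - 2) = n * (n - 2) - T := by
    rw [Finset.sum_sub_distrib, Finset.sum_sub_distrib, Finset.sum_const, Finset.sum_const,
      nsmul_eq_mul, nsmul_eq_mul, hcard]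
    ring
  have hsum2 : ∑ k ∈ Finset.Icc a b, (n - |k - c'| + 3) = n * (n + 3) - T := by
    rw [Finset.sum_add_distrib, Finset.sum_sub_distrib, Finset.sum_const, Finset.sum_const,
      nsmul_eq_mul, nsmul_eq_mul, hcard]
    ring
  have hTval : T * 2 = (c' - a) * (c' - a + 1) + (b - c') * (b - c' + 1) :=
    abs_sum' a b c' hc'1 hc'2
  -- now pass to the reals
  have hNlow : (n : ℝ) * (n - 2) - (T : ℝ) ≤ (N : ℝ) := by
    have : n * (n - 2) - T ≤ (N : ℤ) := by rw [hNcast]; omega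
    exact_mod_cast this
  have hNup : (N : ℝ) ≤ (n : ℝ) * (n + 3) - (T : ℝ) := by
    have : (N : ℤ) ≤ n * (n + 3) - T := by rw [hNcast]; omega
    exact_mod_cast this
  have hTreal : (T : ℝ) = (((c' : ℝ) - a) * ((c' : ℝ) - a + 1)
      + ((b : ℝ) - c') * ((b : ℝ) - c' + 1)) / 2 := by
    have : ((T * 2 : ℤ) : ℝ) = (((c' - a) * (c' - a + 1) + (b - c') * (b - c' + 1) : ℤ) : ℝ) := by
      exact_mod_cast congrArg (fun z : ℤ => (z : ℝ)) hTval
    push_cast at this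
    linarith
  -- main algebraic estimate
  have halg := algebra_bound' u ((b : ℝ) - a + 1) ((c' : ℝ) - a) ((b : ℝ) - c')
      ((m : ℝ) - 4 * u) (5 * u - (m : ℝ)) hu
      (by linarith) (by linarith)
      (by
        have h1 : ((c - 2 : ℤ) : ℝ) ≤ (c' : ℝ) := by exact_mod_cast hcc'1
        push_cast [hc] at h1
        linarith)
      (by
        have h1 : (c' : ℝ) ≤ ((c + 2 : ℤ) : ℝ) := by exact_mod_cast hcc'2
        push_cast [hc] at h1
        linarith)
      (by
        have h1 : (c' : ℝ) ≤ ((c + 2 : ℤ) : ℝ) := by exact_mod_cast hcc'2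
        push_cast [hc] at h1
        linarith)
      (by
        have h1 : ((c - 2 : ℤ) : ℝ) ≤ (c' : ℝ) := by exact_mod_cast hcc'1
        push_cast [hc] at h1
        linarith)
      (by linarith) (by linarith) (by linarith) (by linarith)
      (by
        have : ((a : ℤ) : ℝ) ≤ ((c' : ℤ) : ℝ) := by exact_mod_cast hc'1
        linarith)
      (by
        have : ((c' : ℤ) : ℝ) ≤ ((b : ℤ) : ℝ) := by exact_mod_cast hc'2
        linarith)
      (by
        have : ((c' : ℤ) : ℝ) ≤ ((b : ℤ) : ℝ) := by exact_mod_cast hc'2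
        linarith)
      (by
        have : ((a : ℤ) : ℝ) ≤ ((c' : ℤ) : ℝ) := by exact_mod_cast hc'1
        linarith)
  -- combine
  have hnreal : (n : ℝ) = (b : ℝ) - a + 1 := by push_cast [hn]; ring
  have hnub : (n : ℝ) ≤ u + 1 := by rw [hnreal]; linarith
  have hnlb : u - 1 ≤ (n : ℝ) := by rw [hnreal]; linarith
  rw [abs_le] at halg ⊢
  rw [hnreal] at hNlow hNup
  rw [hTreal] at hNlow hNup
  constructor
  · linarith [halg.1, hNlow]
  · linarith [halg.2, hNup]
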